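/- For all integers n ≥ 1 and 0 ≤ k ≤ n: Σ_{m=0}^{n-k-1} ((2n-2m)/(n-m-k))·C(2n, m)·C(n-m-1+k, n-m-1-k) + C(2n, n-k) = 4^{n-k}·C(n, k), where C(·,·) denotes the binomial coefficient and the sum is empty when k = n. -/

import Mathlib

open Finset

/-- Pascal applied thrice: the key pointwise identity. -/
lemma pointwise14 (t k : ℕ) :
    Nat.choose (t+2) (2*k+2) + 2 * Nat.choose (t+1) (2*k+2) + Nat.choose t (2*k+2)
      = 4 * Nat.choose (t+1) (2*k+2) + Nat.choose t (2*k) := by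
  have h1 : Nat.choose (t+2) (2*k+2) = Nat.choose (t+1) (2*k+1) + Nat.choose (t+1) (2*k+2) := by
    simpa [show 2*k+1+1 = 2*k+2 by ring] using Nat.choose_succ_succ (t+1) (2*k+1)
  have h2 : Nat.choose (t+1) (2*k+1) = Nat.choose t (2*k) + Nat.choose t (2*k+1) := by
    simpa using Nat.choose_succ_succ t (2*k)
  have h3 : Nat.choose (t+1) (2*k+2) = Nat.choose t (2*k+1) + Nat.choose t (2*k+2) := by
    simpa [show 2*k+1+1 = 2*k+2 by ring] using Nat.choose_succ_succ t (2*k+1)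
  omega

/-- Shifting lemma for sums against Pascal's rule. -/
lemma shiftSum14 (N n : ℕ) (f : ℕ → ℕ) :
    ∑ i ∈ range (n+1), Nat.choose (N+1) i * f i
      = ∑ i ∈ range (n+1), Nat.choose N i * f i + ∑ i ∈ range n, Nat.choose N i * f (i+1) := by
  rw [Finset.sum_range_succ' (fun i => Nat.choose (N+1) i * f i) n,
      Finset.sum_range_succ' (fun i => Nat.choose N i * f i) n]
  simp only [Nat.choose_succ_succ, Nat.choose_zero_right, add_mul]
  rw [Finset.sum_add_distrib]
  ring

def G14 (d k : ℕ) : ℕ :=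
  ∑ i ∈ range (d+1), Nat.choose (2*(d+k)+1) i * Nat.choose (d + 2*k - i) (2*k)

lemma shift2_14 (N n : ℕ) (f : ℕ → ℕ) :
    ∑ i ∈ range (n+2), Nat.choose (N+2) i * f i
      = ∑ i ∈ range (n+2), Nat.choose N i * f i
        + 2 * ∑ i ∈ range (n+1), Nat.choose N i * f (i+1)
        + ∑ i ∈ range n, Nat.choose N i * f (i+2) := by
  rw [show n+2 = (n+1)+1 from rfl, show N+2 = (N+1)+1 from rfl,
    shiftSum14 (N+1) (n+1) f, shiftSum14 N (n+1) f, shiftSum14 N n (fun i => f (i+1))]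
  ring

lemma Grec14 (d k : ℕ) : G14 (d+1) (k+1) = 4 * G14 d (k+1) + G14 (d+1) k := by
  have hz : ∀ a b : ℕ, a < b → Nat.choose a b = 0 := fun a b h => Nat.choose_eq_zero_of_lt h
  calc G14 (d+1) (k+1)
      = ∑ i ∈ range (d+2), Nat.choose (2*d+2*k+3+2) i
          * (fun j => Nat.choose (d+2*k+3-j) (2*k+2)) i := by
        unfold G14
        refine Finset.sum_congr rfl fun i hi => ?_
        have e1 : 2*((d+1)+(k+1))+1 = 2*d+2*k+3+2 := by ring
        have e2 : (d+1)+2*(k+1)-i = d+2*k+3-i := by omega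
        have e3 : 2*(k+1) = 2*k+2 := by ring
        rw [e1, e2, e3]
    _ = ∑ i ∈ range (d+2), Nat.choose (2*d+2*k+3) i * Nat.choose (d+2*k+3-i) (2*k+2)
        + 2 * ∑ i ∈ range (d+1), Nat.choose (2*d+2*k+3) i * Nat.choose (d+2*k+3-(i+1)) (2*k+2)
        + ∑ i ∈ range d, Nat.choose (2*d+2*k+3) i * Nat.choose (d+2*k+3-(i+2)) (2*k+2) :=
        shift2_14 (2*d+2*k+3) d (fun j => Nat.choose (d+2*k+3-j) (2*k+2))
    _ = ∑ i ∈ range (d+2), Nat.choose (2*d+2*k+3) i * Nat.choose (d+2*k+3-i) (2*k+2)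
        + 2 * ∑ i ∈ range (d+2), Nat.choose (2*d+2*k+3) i * Nat.choose (d+2*k+2-i) (2*k+2)
        + ∑ i ∈ range (d+2), Nat.choose (2*d+2*k+3) i * Nat.choose (d+2*k+1-i) (2*k+2) := by
        rw [sum_range_succ (fun i => Nat.choose (2*d+2*k+3) i * Nat.choose (d+2*k+2-i) (2*k+2)) (d+1),
          sum_range_succ (fun i => Nat.choose (2*d+2*k+3) i * Nat.choose (d+2*k+1-i) (2*k+2)) (d+1),
          sum_range_succ (fun i => Nat.choose (2*d+2*k+3) i * Nat.choose (d+2*k+1-i) (2*k+2)) d]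
        have z1 : Nat.choose (d+2*k+2-(d+1)) (2*k+2) = 0 := by rw [show d+2*k+2-(d+1) = 2*k+1 by omega]; exact hz _ _ (by omega)
        have z2 : Nat.choose (d+2*k+1-(d+1)) (2*k+2) = 0 := by rw [show d+2*k+1-(d+1) = 2*k by omega]; exact hz _ _ (by omega)
        have z3 : Nat.choose (d+2*k+1-d) (2*k+2) = 0 := by rw [show d+2*k+1-d = 2*k+1 by omega]; exact hz _ _ (by omega)
        rw [z1, z2, z3]
        have e4 : ∀ i ∈ range (d+1), Nat.choose (2*d+2*k+3) i * Nat.choose (d+2*k+3-(i+1)) (2*k+2)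
            = Nat.choose (2*d+2*k+3) i * Nat.choose (d+2*k+2-i) (2*k+2) := by
          intro i hi; rw [show d+2*k+3-(i+1) = d+2*k+2-i by omega]
        have e5 : ∀ i ∈ range d, Nat.choose (2*d+2*k+3) i * Nat.choose (d+2*k+3-(i+2)) (2*k+2)
            = Nat.choose (2*d+2*k+3) i * Nat.choose (d+2*k+1-i) (2*k+2) := by
          intro i hi; rw [show d+2*k+3-(i+2) = d+2*k+1-i by omega]
        rw [Finset.sum_congr rfl e4, Finset.sum_congr rfl e5]
        ring
    _ = ∑ i ∈ range (d+2), (Nat.choose (2*d+2*k+3) i * Nat.choose (d+2*k+3-i) (2*k+2)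
          + 2 * (Nat.choose (2*d+2*k+3) i * Nat.choose (d+2*k+2-i) (2*k+2))
          + Nat.choose (2*d+2*k+3) i * Nat.choose (d+2*k+1-i) (2*k+2)) := by
        rw [Finset.sum_add_distrib, Finset.sum_add_distrib, Finset.mul_sum]
    _ = ∑ i ∈ range (d+2), (4 * (Nat.choose (2*d+2*k+3) i * Nat.choose (d+2*k+2-i) (2*k+2))
          + Nat.choose (2*d+2*k+3) i * Nat.choose (d+2*k+1-i) (2*k)) := by
        refine Finset.sum_congr rfl fun i hi => ?_
        simp only [Finset.mem_range] at hi
        have hp := pointwise14 (d+2*k+1-i) k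
        rw [show d+2*k+1-i+2 = d+2*k+3-i by omega, show d+2*k+1-i+1 = d+2*k+2-i by omega] at hp
        calc Nat.choose (2*d+2*k+3) i * Nat.choose (d+2*k+3-i) (2*k+2)
              + 2 * (Nat.choose (2*d+2*k+3) i * Nat.choose (d+2*k+2-i) (2*k+2))
              + Nat.choose (2*d+2*k+3) i * Nat.choose (d+2*k+1-i) (2*k+2)
            = Nat.choose (2*d+2*k+3) i * (Nat.choose (d+2*k+3-i) (2*k+2)
                + 2 * Nat.choose (d+2*k+2-i) (2*k+2) + Nat.choose (d+2*k+1-i) (2*k+2)) := by ring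
          _ = Nat.choose (2*d+2*k+3) i * (4 * Nat.choose (d+2*k+2-i) (2*k+2)
                + Nat.choose (d+2*k+1-i) (2*k)) := by rw [hp]
          _ = _ := by ring
    _ = 4 * ∑ i ∈ range (d+2), Nat.choose (2*d+2*k+3) i * Nat.choose (d+2*k+2-i) (2*k+2)
        + ∑ i ∈ range (d+2), Nat.choose (2*d+2*k+3) i * Nat.choose (d+2*k+1-i) (2*k) := by
        rw [Finset.sum_add_distrib, Finset.mul_sum]
    _ = 4 * G14 d (k+1) + G14 (d+1) k := by
        unfold G14
        congr 1
        · congr 1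
          rw [sum_range_succ (fun i => Nat.choose (2*d+2*k+3) i * Nat.choose (d+2*k+2-i) (2*k+2)) (d+1)]
          have z1 : Nat.choose (d+2*k+2-(d+1)) (2*k+2) = 0 := by rw [show d+2*k+2-(d+1) = 2*k+1 by omega]; exact hz _ _ (by omega)
          rw [z1]
          simp only [mul_zero, add_zero]
          refine Finset.sum_congr rfl fun i hi => ?_
          rw [show 2*(d+(k+1))+1 = 2*d+2*k+3 by ring, show d+2*(k+1) = d+2*k+2 by ring, show 2*(k+1) = 2*k+2 by ring]
        · refine Finset.sum_congr rfl fun i hi => ?_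
          rw [show 2*((d+1)+k)+1 = 2*d+2*k+3 by ring, show (d+1)+2*k = d+2*k+1 by ring]

lemma Gval14 : ∀ k d : ℕ, G14 d k = 4^d * Nat.choose (d+k) k := by
  intro k
  induction k with
  | zero =>
    intro d
    unfold G14
    have h : ∀ i ∈ range (d+1), Nat.choose (2*(d+0)+1) i * Nat.choose (d+2*0-i) (2*0)
        = Nat.choose (2*d+1) i := by intro i hi; simp
    rw [Finset.sum_congr rfl h, Nat.sum_range_choose_halfway d]
    simp
  | succ k ihk =>
    intro d
    induction d with
    | zero =>
      unfold G14
      simp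
    | succ d ihd =>
      rw [Grec14, ihd, ihk (d+1)]
      rw [show d+1+(k+1) = (d+k+1)+1 by ring, show d+1+k = d+k+1 by ring,
        Nat.choose_succ_succ (d+k+1) k, show d+(k+1) = d+k+1 by ring]
      ring

lemma keyNat14 (b k : ℕ) :
    (b+1) * (Nat.choose (2*k+b+1) (2*k) + Nat.choose (2*k+b) (2*k))
      = 2*(k+b+1) * Nat.choose (2*k+b) (2*k) := by
  have hs1 : Nat.choose (2*k+b) b = Nat.choose (2*k+b) (2*k) := by
    have := Nat.choose_symm (n := 2*k+b) (k := 2*k) (by omega)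
    rwa [show 2*k+b-2*k = b by omega] at this
  have hs2 : Nat.choose (2*k+b+1) (b+1) = Nat.choose (2*k+b+1) (2*k) := by
    have := Nat.choose_symm (n := 2*k+b+1) (k := 2*k) (by omega)
    rwa [show 2*k+b+1-2*k = b+1 by omega] at this
  have h1 : (2*k+b+1) * Nat.choose (2*k+b) (2*k) = Nat.choose (2*k+b+1) (2*k) * (b+1) := by
    have := Nat.add_one_mul_choose_eq (2*k+b) b
    rwa [hs1, hs2] at this
  have h2 : (b+1) * Nat.choose (2*k+b+1) (2*k) = (2*k+b+1) * Nat.choose (2*k+b) (2*k) := by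
    rw [h1]; ring
  rw [mul_add, h2]; ring

lemma natId14 (d k : ℕ) :
    ∑ m ∈ range d, Nat.choose (2*(d+k)) m
        * (Nat.choose (d+2*k-m) (2*k) + Nat.choose (d+2*k-m-1) (2*k))
      + Nat.choose (2*(d+k)) d = 4^d * Nat.choose (d+k) k := by
  rw [← Gval14 k d]
  unfold G14
  rw [shiftSum14 (2*(d+k)) d (fun i => Nat.choose (d+2*k-i) (2*k)),
    sum_range_succ (fun i => Nat.choose (2*(d+k)) i * Nat.choose (d+2*k-i) (2*k)) d,
    show d+2*k-d = 2*k by omega, Nat.choose_self, mul_one]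
  have e : ∀ m ∈ range d, Nat.choose (2*(d+k)) m
        * (Nat.choose (d+2*k-m) (2*k) + Nat.choose (d+2*k-m-1) (2*k))
      = Nat.choose (2*(d+k)) m * Nat.choose (d+2*k-m) (2*k)
        + Nat.choose (2*(d+k)) m * Nat.choose (d+2*k-(m+1)) (2*k) := by
    intro m hm
    rw [show d+2*k-(m+1) = d+2*k-m-1 by omega]; ring
  rw [Finset.sum_congr rfl e, Finset.sum_add_distrib]
  ring


/-- The combinatorial identity encoding the expansion of (z - z⁻¹)^{2n} in
powers of z + z⁻¹. -/
theorem stmt14 (n k : ℕ) (hn : 1 ≤ n) (hk : k ≤ n) :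
    (∑ m ∈ Finset.range (n - k),
        ((2 * (n : ℚ) - 2 * m) / ((n : ℚ) - m - k)) * (Nat.choose (2 * n) m : ℚ)
          * (Nat.choose (n - m - 1 + k) (n - m - 1 - k) : ℚ))
      + (Nat.choose (2 * n) (n - k) : ℚ)
      = 4 ^ (n - k) * (Nat.choose n k : ℚ) := by
  obtain ⟨d, rfl⟩ : ∃ d, n = d + k := ⟨n - k, by omega⟩
  rw [show d + k - k = d by omega]
  have hterm : ∀ m ∈ range d,
      ((2 * ((d+k : ℕ) : ℚ) - 2 * m) / (((d+k : ℕ) : ℚ) - m - k)) * (Nat.choose (2 * (d+k)) m : ℚ)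
          * (Nat.choose (d+k - m - 1 + k) (d+k - m - 1 - k) : ℚ)
      = ((Nat.choose (2*(d+k)) m
        * (Nat.choose (d+2*k-m) (2*k) + Nat.choose (d+2*k-m-1) (2*k)) : ℕ) : ℚ) := by
    intro m hm
    simp only [mem_range] at hm
    obtain ⟨c, rfl⟩ : ∃ c, d = m + c + 1 := ⟨d - m - 1, by omega⟩
    have ha1 : m+c+1+k - m - 1 + k = c + 2*k := by omega
    have ha2 : m+c+1+k - m - 1 - k = c := by omega
    have ha3 : m+c+1 + 2*k - m = c + 2*k + 1 := by omega
    have ha4 : m+c+1 + 2*k - m - 1 = c + 2*k := by omega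
    rw [ha1, ha2, ha4, ha3]
    have hsym : Nat.choose (c + 2*k) c = Nat.choose (c + 2*k) (2*k) := by
      have := Nat.choose_symm (n := c + 2*k) (k := 2*k) (by omega)
      rwa [show c+2*k-2*k = c by omega] at this
    rw [hsym]
    have hq : ((c : ℚ)+1) * ((Nat.choose (c+2*k+1) (2*k) : ℚ) + (Nat.choose (c+2*k) (2*k) : ℚ))
        = 2*((k : ℚ)+c+1) * (Nat.choose (c+2*k) (2*k) : ℚ) := by
      have := keyNat14 c k
      rw [show 2*k+c+1 = c+2*k+1 by ring, show 2*k+c = c+2*k by ring] at this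
      exact_mod_cast this
    have hnum : 2 * (((m+c+1+k : ℕ)) : ℚ) - 2 * m = 2*((k:ℚ)+c+1) := by push_cast; ring
    have hden : (((m+c+1+k : ℕ)) : ℚ) - m - k = (c:ℚ)+1 := by push_cast; ring
    rw [hnum, hden]
    have hne : ((c:ℚ)+1) ≠ 0 := by positivity
    push_cast
    field_simp
    linear_combination (-1 : ℚ) * (Nat.choose (2*(m+c+1+k)) m : ℚ) * hq
  rw [Finset.sum_congr rfl hterm, ← Nat.cast_sum]
  exact_mod_cast natId14 d k
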